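/- arXiv:2404.13877 — 2 statements merged into one kernel-verified Lean document; each statement's English description precedes it below -/
import Mathlib

section
/- Let Q = {(x,y,z) ∈ {0,1}³ | 1 ≤ x+y+z ≤ 2} ⊆ ℤ³ with the product order, and let m ∈ F with m ≠ 0. Define the thin persistence module M_m:(ℤ,≤)³→vect_F by M_m(i) = F if i ∈ Q and 0 otherwise, with M_m(i≤j) being multiplication by m if i = (0,1,0) and j = (1,1,0), the identity for any other comparable pair with both endpoints in Q, and 0 otherwise. Then M_m is indecomposable for every m ≠ 0, and M_m is isomorphic to the interval module FQ if and only if m = 1. Consequently, if F contains an element m ∉ {0,1}, there exists an indecomposable thin persistence module over (ℤ,≤)³ that is not isomorphic to any interval module. -/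
/-- A persistence module over a preorder `P` with coefficients in a field `F`:
a functor `(P,≤) → Vect_F`, given by vector spaces `V p` and linear maps
`map : i ≤ j → (V i →ₗ[F] V j)` satisfying the functoriality equations. -/
structure PersistenceModule (F : Type) [Field F] (P : Type) [Preorder P] where
  V : P → Type
  [addCommGroup : ∀ p, AddCommGroup (V p)]
  [module : ∀ p, Module F (V p)]
  map : ∀ {i j : P}, i ≤ j → (V i →ₗ[F] V j)
  map_id : ∀ i : P, map (le_refl i) = LinearMap.id
  map_comp : ∀ {i j k : P} (hij : i ≤ j) (hjk : j ≤ k),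
    (map hjk).comp (map hij) = map (hij.trans hjk)

attribute [instance] PersistenceModule.addCommGroup PersistenceModule.module

/-- A zigzag path `a - x₁ - ⋯ - xₙ - b` in a preorder, where each consecutive
pair of points is comparable. -/
inductive Zigzag (P : Type) [Preorder P] : P → P → Type
  | single (a : P) : Zigzag P a a
  | consLe {a b c : P} (h : a ≤ b) (p : Zigzag P b c) : Zigzag P a c
  | consGe {a b c : P} (h : b ≤ a) (p : Zigzag P b c) : Zigzag P a c

/-- Convexity of a subset of a poset: `i ≤ j ≤ k` with `i, k ∈ J` implies `j ∈ J`. -/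
def PosetConvex {P : Type} [Preorder P] (J : Set P) : Prop :=
  ∀ i ∈ J, ∀ k ∈ J, ∀ j : P, i ≤ j → j ≤ k → j ∈ J

/-- Connectedness: any two points of `J` are joined by a finite zigzag path inside `J`. -/
def ZigzagConnected {P : Type} [Preorder P] (J : Set P) : Prop :=
  ∀ a b : J, Nonempty (Zigzag (↥J) a b)

open Classical in
/-- The interval (polytope) module `F𝕀` on a convex subset `I`: the vector space `F`
at points of `I` (realized as the submodule `⊤ ≤ F`) and `0` (the submodule `⊥`)
elsewhere, with identity maps for comparable pairs inside `I` and zero maps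
otherwise. -/
noncomputable def intervalModule (F : Type) [Field F] {P : Type} [Preorder P]
    (I : Set P) (hconv : PosetConvex I) : PersistenceModule F P where
  V p := ↥(if p ∈ I then (⊤ : Submodule F F) else ⊥)
  addCommGroup _ := inferInstance
  module _ := inferInstance
  map {i j} _ :=
    if hij : i ∈ I ∧ j ∈ I then
      Submodule.inclusion (by simp [hij.1, hij.2])
    else 0
  map_id := by
    intro i
    try dsimp only
    by_cases hi : i ∈ I
    · rw [dif_pos (show i ∈ I ∧ i ∈ I from ⟨hi, hi⟩)]
      ext x
      rfl
    · rw [dif_neg (show ¬(i ∈ I ∧ i ∈ I) from fun h => hi h.1)]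
      have : Subsingleton ↥(if i ∈ I then (⊤ : Submodule F F) else ⊥) := by
        rw [if_neg hi]; infer_instance
      exact Subsingleton.elim _ _
  map_comp := by
    intro i j k hij hjk
    try dsimp only
    by_cases hi : i ∈ I
    · by_cases hk : k ∈ I
      · have hj : j ∈ I := hconv i hi k hk j hij hjk
        rw [dif_pos (show i ∈ I ∧ j ∈ I from ⟨hi, hj⟩),
          dif_pos (show j ∈ I ∧ k ∈ I from ⟨hj, hk⟩),
          dif_pos (show i ∈ I ∧ k ∈ I from ⟨hi, hk⟩)]
        ext x
        rfl
      · rw [dif_neg (show ¬(j ∈ I ∧ k ∈ I) from fun h => hk h.2),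
          dif_neg (show ¬(i ∈ I ∧ k ∈ I) from fun h => hk h.2)]
        have : Subsingleton ↥(if k ∈ I then (⊤ : Submodule F F) else ⊥) := by
          rw [if_neg hk]; infer_instance
        exact Subsingleton.elim _ _
    · rw [dif_neg (show ¬(i ∈ I ∧ j ∈ I) from fun h => hi h.1),
        dif_neg (show ¬(i ∈ I ∧ k ∈ I) from fun h => hi h.1)]
      ext x
      simp

/-- A subrepresentation of a persistence module: a family of submodules closed
under the structure maps. -/
structure Subrep {F : Type} [Field F] {P : Type} [Preorder P] (M : PersistenceModule F P) where
  S : ∀ p, Submodule F (M.V p)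
  stable : ∀ {i j : P} (h : i ≤ j), Submodule.map (M.map h) (S i) ≤ S j

/-- A persistence module is decomposable if it is the (internal) direct sum of two
nonzero subrepresentations. -/
def PersistenceModule.Decomposable {F : Type} [Field F] {P : Type} [Preorder P]
    (M : PersistenceModule F P) : Prop :=
  ∃ A B : Subrep M, (∃ p, A.S p ≠ ⊥) ∧ (∃ p, B.S p ≠ ⊥) ∧ ∀ p, IsCompl (A.S p) (B.S p)

/-- Isomorphism of persistence modules: a family of linear equivalences commuting
with the structure maps. -/
def IsIsomorphic {F : Type} [Field F] {P : Type} [Preorder P]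
    (M N : PersistenceModule F P) : Prop :=
  ∃ f : ∀ p, M.V p ≃ₗ[F] N.V p, ∀ (i j : P) (h : i ≤ j),
    (N.map h).comp (f i).toLinearMap = (f j).toLinearMap.comp (M.map h)

/-- The index set `Q = {(x,y,z) ∈ {0,1}³ | 1 ≤ x+y+z ≤ 2} ⊆ ℤ³`. -/
def Qset : Set (ℤ × ℤ × ℤ) :=
  {i | (i.1 = 0 ∨ i.1 = 1) ∧ (i.2.1 = 0 ∨ i.2.1 = 1) ∧ (i.2.2 = 0 ∨ i.2.2 = 1) ∧
    1 ≤ i.1 + i.2.1 + i.2.2 ∧ i.1 + i.2.1 + i.2.2 ≤ 2}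

theorem Qset_convex : PosetConvex Qset := by
  rintro ⟨x1, y1, z1⟩ hi ⟨x3, y3, z3⟩ hk ⟨x2, y2, z2⟩ hij hjk
  simp only [Qset, Set.mem_setOf_eq, Prod.mk_le_mk] at hi hk hij hjk ⊢
  omega

open Classical in
/-- The thin persistence module `M_m` over `(ℤ,≤)³`: it is `F` on `Q` and `0`
elsewhere; the structure map is multiplication by `m` from `(0,1,0)` to `(1,1,0)`,
the identity on every other comparable pair inside `Q`, and `0` otherwise. -/
noncomputable def Mex (F : Type) [Field F] (m : F) : PersistenceModule F (ℤ × ℤ × ℤ) where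
  V i := ↥(if i ∈ Qset then (⊤ : Submodule F F) else ⊥)
  addCommGroup _ := inferInstance
  module _ := inferInstance
  map {i j} _ :=
    if hij : i ∈ Qset ∧ j ∈ Qset then
      (if i = ((0 : ℤ), (1 : ℤ), (0 : ℤ)) ∧ j = ((1 : ℤ), (1 : ℤ), (0 : ℤ)) then
        m • Submodule.inclusion (le_of_eq (by simp [hij.1, hij.2]))
      else Submodule.inclusion (le_of_eq (by simp [hij.1, hij.2])))
    else 0
  map_id := by
    intro i
    try dsimp only
    by_cases hi : i ∈ Qset
    · rw [dif_pos (show i ∈ Qset ∧ i ∈ Qset from ⟨hi, hi⟩),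
        if_neg (show ¬(i = ((0:ℤ),(1:ℤ),(0:ℤ)) ∧ i = ((1:ℤ),(1:ℤ),(0:ℤ))) from
          fun h => by rw [h.1] at h; exact absurd h.2 (by decide))]
      ext x
      rfl
    · rw [dif_neg (show ¬(i ∈ Qset ∧ i ∈ Qset) from fun h => hi h.1)]
      have : Subsingleton ↥(if i ∈ Qset then (⊤ : Submodule F F) else ⊥) := by
        rw [if_neg hi]; infer_instance
      exact Subsingleton.elim _ _
  map_comp := by
    intro i j k hij hjk
    try dsimp only
    by_cases hi : i ∈ Qset
    · by_cases hk : k ∈ Qset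
      · have hj : j ∈ Qset := Qset_convex i hi k hk j hij hjk
        rw [dif_pos (show i ∈ Qset ∧ j ∈ Qset from ⟨hi, hj⟩),
          dif_pos (show j ∈ Qset ∧ k ∈ Qset from ⟨hj, hk⟩),
          dif_pos (show i ∈ Qset ∧ k ∈ Qset from ⟨hi, hk⟩)]
        by_cases hik : i = ((0:ℤ),(1:ℤ),(0:ℤ)) ∧ k = ((1:ℤ),(1:ℤ),(0:ℤ))
        · rw [if_pos hik]
          -- j is squeezed between (0,1,0) and (1,1,0), hence equals one of them
          have hjcase : j = ((0:ℤ),(1:ℤ),(0:ℤ)) ∨ j = ((1:ℤ),(1:ℤ),(0:ℤ)) := by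
            obtain ⟨j1, j2, j3⟩ := j
            rw [hik.1] at hij
            rw [hik.2] at hjk
            simp only [Prod.mk_le_mk, Prod.mk.injEq] at hij hjk ⊢
            omega
          rcases hjcase with hj' | hj'
          · rw [if_neg (show ¬(i = ((0:ℤ),(1:ℤ),(0:ℤ)) ∧ j = ((1:ℤ),(1:ℤ),(0:ℤ))) from
                fun h => by rw [hj'] at h; exact absurd h.2 (by decide)),
              if_pos (show j = ((0:ℤ),(1:ℤ),(0:ℤ)) ∧ k = ((1:ℤ),(1:ℤ),(0:ℤ)) from ⟨hj', hik.2⟩)]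
            ext x
            rfl
          · rw [if_pos (show i = ((0:ℤ),(1:ℤ),(0:ℤ)) ∧ j = ((1:ℤ),(1:ℤ),(0:ℤ)) from ⟨hik.1, hj'⟩),
              if_neg (show ¬(j = ((0:ℤ),(1:ℤ),(0:ℤ)) ∧ k = ((1:ℤ),(1:ℤ),(0:ℤ))) from
                fun h => by rw [hj'] at h; exact absurd h.1 (by decide))]
            ext x
            rfl
        · -- (i,k) is not the special pair; then neither (i,j) nor (j,k) can be special
          have hij' : ¬(i = ((0:ℤ),(1:ℤ),(0:ℤ)) ∧ j = ((1:ℤ),(1:ℤ),(0:ℤ))) := by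
            rintro ⟨h1, h2⟩
            apply hik
            refine ⟨h1, ?_⟩
            obtain ⟨k1, k2, k3⟩ := k
            rw [h2] at hjk
            simp only [Qset, Set.mem_setOf_eq] at hk
            simp only [Prod.mk_le_mk, Prod.mk.injEq] at hjk ⊢
            omega
          have hjk' : ¬(j = ((0:ℤ),(1:ℤ),(0:ℤ)) ∧ k = ((1:ℤ),(1:ℤ),(0:ℤ))) := by
            rintro ⟨h1, h2⟩
            apply hik
            refine ⟨?_, h2⟩
            obtain ⟨i1, i2, i3⟩ := i
            rw [h1] at hij
            simp only [Qset, Set.mem_setOf_eq] at hi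
            simp only [Prod.mk_le_mk, Prod.mk.injEq] at hij ⊢
            omega
          rw [if_neg hij', if_neg hjk', if_neg hik]
          ext x
          rfl
      · rw [dif_neg (show ¬(j ∈ Qset ∧ k ∈ Qset) from fun h => hk h.2),
          dif_neg (show ¬(i ∈ Qset ∧ k ∈ Qset) from fun h => hk h.2)]
        have : Subsingleton ↥(if k ∈ Qset then (⊤ : Submodule F F) else ⊥) := by
          rw [if_neg hk]; infer_instance
        exact Subsingleton.elim _ _
    · rw [dif_neg (show ¬(i ∈ Qset ∧ j ∈ Qset) from fun h => hi h.1),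
        dif_neg (show ¬(i ∈ Qset ∧ k ∈ Qset) from fun h => hi h.1)]
      ext x
      simp

section AuxLemmas

variable {F : Type} [Field F]

set_option maxHeartbeats 1000000 in
lemma memQ_cases (p : ℤ × ℤ × ℤ) (hp : p ∈ Qset) :
    p = ((1:ℤ),(0:ℤ),(0:ℤ)) ∨ p = ((0:ℤ),(1:ℤ),(0:ℤ)) ∨ p = ((0:ℤ),(0:ℤ),(1:ℤ)) ∨
    p = ((1:ℤ),(1:ℤ),(0:ℤ)) ∨ p = ((1:ℤ),(0:ℤ),(1:ℤ)) ∨ p = ((0:ℤ),(1:ℤ),(1:ℤ)) := by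
  obtain ⟨x, y, z⟩ := p
  simp only [Qset, Set.mem_setOf_eq] at hp
  simp only [Prod.mk.injEq]
  omega

lemma subm_cases {S : Submodule F F} (T : Submodule F ↥S) : T = ⊥ ∨ T = ⊤ := by
  by_cases hT : T = ⊥
  · exact Or.inl hT
  · right
    obtain ⟨x, hxT, hx0⟩ := Submodule.exists_mem_ne_zero_of_ne_bot hT
    have hxv : (x : F) ≠ 0 := fun h => hx0 (Subtype.ext h)
    rw [eq_top_iff]
    intro y _
    have hy : y = ((y : F) * (x : F)⁻¹) • x := by
      apply Subtype.ext
      show (y : F) = ((y : F) * (x : F)⁻¹) * (x : F)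
      field_simp
    rw [hy]
    exact T.smul_mem _ hxT

noncomputable def eMex (m : F) (p : ℤ × ℤ × ℤ) (hp : p ∈ Qset) : (Mex F m).V p :=
  ⟨1, by simp only [hp, if_true]; trivial⟩

lemma eMex_ne_zero (m : F) (p : ℤ × ℤ × ℤ) (hp : p ∈ Qset) : eMex m p hp ≠ 0 :=
  fun h => one_ne_zero (congrArg Subtype.val h)

lemma mex_val_eq_zero (m : F) {p : ℤ × ℤ × ℤ} (hp : p ∉ Qset) (x : (Mex F m).V p) :
    x = 0 := by
  apply Subtype.ext
  have h2 := x.2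
  simp only [hp, if_false] at h2
  exact h2

open Classical in
lemma mex_map_val (m : F) {i j : ℤ × ℤ × ℤ} (hi : i ∈ Qset) (hj : j ∈ Qset)
    (h : i ≤ j) (x : (Mex F m).V i) :
    (((Mex F m).map h) x).1 =
      (if i = ((0:ℤ),(1:ℤ),(0:ℤ)) ∧ j = ((1:ℤ),(1:ℤ),(0:ℤ)) then m else 1) * x.1 := by
  simp only [Mex, dif_pos (And.intro hi hj)]
  by_cases hs : i = ((0:ℤ),(1:ℤ),(0:ℤ)) ∧ j = ((1:ℤ),(1:ℤ),(0:ℤ))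
  · rw [if_pos hs, if_pos hs]; rfl
  · rw [if_neg hs, if_neg hs]; rw [one_mul]; rfl

lemma mex_surj {m : F} (hm : m ≠ 0) {i j : ℤ × ℤ × ℤ} (hi : i ∈ Qset) (hj : j ∈ Qset)
    (h : i ≤ j) : Function.Surjective ((Mex F m).map h) := by
  intro y
  have hc : (if i = ((0:ℤ),(1:ℤ),(0:ℤ)) ∧ j = ((1:ℤ),(1:ℤ),(0:ℤ)) then m else 1) ≠ 0 := by
    split_ifs
    exacts [hm, one_ne_zero]
  refine ⟨⟨(if i = ((0:ℤ),(1:ℤ),(0:ℤ)) ∧ j = ((1:ℤ),(1:ℤ),(0:ℤ)) then m else 1)⁻¹ * y.1,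
    by simp only [hi, if_true]; trivial⟩, Subtype.ext ?_⟩
  exact (mex_map_val m hi hj h _).trans (mul_inv_cancel_left₀ hc _)

section Interval
variable {P : Type} [Preorder P] {I : Set P}

noncomputable def eInt (F : Type) [Field F] {P : Type} [Preorder P] {I : Set P} (hconv : PosetConvex I) (p : P) (hp : p ∈ I) : (intervalModule F I hconv).V p :=
  ⟨1, by simp only [hp, if_true]; trivial⟩

lemma eInt_ne_zero {I : Set P} (hconv : PosetConvex I) (p : P) (hp : p ∈ I) :
    eInt F hconv p hp ≠ 0 :=
  fun h => one_ne_zero (congrArg Subtype.val h)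

lemma int_val_eq_zero {I : Set P} (hconv : PosetConvex I) {p : P} (hp : p ∉ I) (x : (intervalModule F I hconv).V p) :
    x = 0 := by
  apply Subtype.ext
  have h2 := x.2
  simp only [hp, if_false] at h2
  exact h2

open Classical in
lemma int_map_val {I : Set P} (hconv : PosetConvex I) {i j : P} (hi : i ∈ I) (hj : j ∈ I) (h : i ≤ j)
    (x : (intervalModule F I hconv).V i) :
    (((intervalModule F I hconv).map h) x).1 = x.1 := by
  simp only [intervalModule, dif_pos (And.intro hi hj)]
  rfl

end Interval

end AuxLemmas

/-- For every `m ≠ 0` the module `M_m` is thin and indecomposable,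
and `M_m` is isomorphic to the interval module `FQ` if and only if `m = 1`.
Consequently, if `m ∉ {0,1}`, there is an indecomposable thin persistence module over
`(ℤ,≤)³` not isomorphic to any interval module. -/
theorem statement15 (F : Type) [Field F] (m : F) (hm : m ≠ 0) :
    (∀ i, Module.rank F ((Mex F m).V i) ≤ 1) ∧
    ¬ (Mex F m).Decomposable ∧
    (IsIsomorphic (Mex F m) (intervalModule F Qset Qset_convex) ↔ m = 1) ∧
    (m ≠ 1 →
      ∃ M' : PersistenceModule F (ℤ × ℤ × ℤ),
        (∀ i, Module.rank F (M'.V i) ≤ 1) ∧ ¬ M'.Decomposable ∧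
        ∀ (I : Set (ℤ × ℤ × ℤ)) (hconv : PosetConvex I), ZigzagConnected I →
          ¬ IsIsomorphic M' (intervalModule F I hconv)) := by
  classical
  have qa : ((1:ℤ),(0:ℤ),(0:ℤ)) ∈ Qset := by norm_num [Qset]
  have qb : ((0:ℤ),(1:ℤ),(0:ℤ)) ∈ Qset := by norm_num [Qset]
  have qc : ((0:ℤ),(0:ℤ),(1:ℤ)) ∈ Qset := by norm_num [Qset]
  have qd : ((1:ℤ),(1:ℤ),(0:ℤ)) ∈ Qset := by norm_num [Qset]
  have qe : ((1:ℤ),(0:ℤ),(1:ℤ)) ∈ Qset := by norm_num [Qset]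
  have qf : ((0:ℤ),(1:ℤ),(1:ℤ)) ∈ Qset := by norm_num [Qset]
  have lad : ((1:ℤ),(0:ℤ),(0:ℤ)) ≤ ((1:ℤ),(1:ℤ),(0:ℤ)) := by simp [Prod.le_def]
  have lae : ((1:ℤ),(0:ℤ),(0:ℤ)) ≤ ((1:ℤ),(0:ℤ),(1:ℤ)) := by simp [Prod.le_def]
  have lbd : ((0:ℤ),(1:ℤ),(0:ℤ)) ≤ ((1:ℤ),(1:ℤ),(0:ℤ)) := by simp [Prod.le_def]
  have lbf : ((0:ℤ),(1:ℤ),(0:ℤ)) ≤ ((0:ℤ),(1:ℤ),(1:ℤ)) := by simp [Prod.le_def]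
  have lce : ((0:ℤ),(0:ℤ),(1:ℤ)) ≤ ((1:ℤ),(0:ℤ),(1:ℤ)) := by simp [Prod.le_def]
  have lcf : ((0:ℤ),(0:ℤ),(1:ℤ)) ≤ ((0:ℤ),(1:ℤ),(1:ℤ)) := by simp [Prod.le_def]
  have hrank : ∀ i, Module.rank F ((Mex F m).V i) ≤ 1 := by
    intro i
    exact (Submodule.rank_le _).trans_eq (Module.rank_self F)
  have hindec : ¬ (Mex F m).Decomposable := by
    rintro ⟨A, B, ⟨pA, hA0⟩, ⟨pB, hB0⟩, hcompl⟩
    have hout : ∀ (C : Subrep (Mex F m)) (p : ℤ × ℤ × ℤ), p ∉ Qset → C.S p = ⊥ := by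
      intro C p hp
      rw [eq_bot_iff]
      intro x _
      rw [mex_val_eq_zero m hp x]
      exact Submodule.zero_mem ⊥
    have hbotne : ∀ p : ℤ × ℤ × ℤ, p ∈ Qset → (⊥ : Submodule F ((Mex F m).V p)) ≠ ⊤ := by
      intro p hp h
      have h1 : eMex m p hp ∈ (⊥ : Submodule F ((Mex F m).V p)) := by
        rw [h]; exact Submodule.mem_top
      exact eMex_ne_zero m p hp ((Submodule.mem_bot F).mp h1)
    have hcs : ∀ (C : Subrep (Mex F m)) (p : ℤ × ℤ × ℤ), C.S p = ⊥ ∨ C.S p = ⊤ :=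
      fun C p => subm_cases (C.S p)
    have up : ∀ (C : Subrep (Mex F m)) (i j : ℤ × ℤ × ℤ), i ∈ Qset → j ∈ Qset → i ≤ j →
        C.S i = ⊤ → C.S j = ⊤ := by
      intro C i j hi hj hij hCi
      have h2 := C.stable hij
      rw [hCi, Submodule.map_top, LinearMap.range_eq_top.2 (mex_surj hm hi hj hij)] at h2
      exact top_le_iff.mp h2
    have AtoB : ∀ p : ℤ × ℤ × ℤ, p ∈ Qset → A.S p = ⊤ → B.S p = ⊥ := by
      intro p hp hA
      rcases hcs B p with h | h
      · exact h
      · exfalso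
        have hd := (hcompl p).disjoint
        rw [hA, h] at hd
        exact hbotne p hp (disjoint_self.mp hd).symm
    have down : ∀ (i j : ℤ × ℤ × ℤ), i ∈ Qset → j ∈ Qset → i ≤ j →
        A.S j = ⊤ → A.S i = ⊤ := by
      intro i j hi hj hij hAj
      rcases hcs A i with hAi | hAi
      · exfalso
        have hBi : B.S i = ⊤ := by
          have hco := (hcompl i).symm.codisjoint
          rw [hAi] at hco
          exact codisjoint_bot.mp hco
        have hBj : B.S j = ⊤ := up B i j hi hj hij hBi
        have hBj' : B.S j = ⊥ := AtoB j hj hAj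
        rw [hBj] at hBj'
        exact hbotne j hj hBj'.symm
      · exact hAi
    have hpA : pA ∈ Qset := by
      by_contra h
      exact hA0 (hout A pA h)
    have hAtop : A.S pA = ⊤ := (hcs A pA).resolve_left hA0
    have hAd : A.S ((1:ℤ),(1:ℤ),(0:ℤ)) = ⊤ := by
      rcases memQ_cases pA hpA with h | h | h | h | h | h <;> subst h
      · exact up A _ _ qa qd lad hAtop
      · exact up A _ _ qb qd lbd hAtop
      · exact up A _ _ qa qd lad (down _ _ qa qe lae (up A _ _ qc qe lce hAtop))
      · exact hAtop
      · exact up A _ _ qa qd lad (down _ _ qa qe lae hAtop)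
      · exact up A _ _ qb qd lbd (down _ _ qb qf lbf hAtop)
    have hAa := down _ _ qa qd lad hAd
    have hAb := down _ _ qb qd lbd hAd
    have hAe := up A _ _ qa qe lae hAa
    have hAc := down _ _ qc qe lce hAe
    have hAf := up A _ _ qc qf lcf hAc
    have hBbot : ∀ p, B.S p = ⊥ := by
      intro p
      by_cases hp : p ∈ Qset
      · refine AtoB p hp ?_
        rcases memQ_cases p hp with h | h | h | h | h | h <;> subst h <;> assumption
      · exact hout B p hp
    exact hB0 (hBbot pB)
  have hiff : IsIsomorphic (Mex F m) (intervalModule F Qset Qset_convex) ↔ m = 1 := by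
    constructor
    · rintro ⟨f, hf⟩
      have lamne : ∀ (p : ℤ × ℤ × ℤ) (hp : p ∈ Qset), ((f p) (eMex m p hp)).1 ≠ 0 := by
        intro p hp h0
        have h1 : (f p) (eMex m p hp) = 0 := Subtype.ext h0
        exact eMex_ne_zero m p hp ((LinearEquiv.map_eq_zero_iff (f p)).mp h1)
      have key : ∀ (i j : ℤ × ℤ × ℤ) (hi : i ∈ Qset) (hj : j ∈ Qset), i ≤ j →
          ((f i) (eMex m i hi)).1 =
            (if i = ((0:ℤ),(1:ℤ),(0:ℤ)) ∧ j = ((1:ℤ),(1:ℤ),(0:ℤ)) then m else 1) *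
              ((f j) (eMex m j hj)).1 := by
        intro i j hi hj hij
        have hsq := LinearMap.congr_fun (hf i j hij) (eMex m i hi)
        simp only [LinearMap.comp_apply, LinearEquiv.coe_coe] at hsq
        have h2 : (Mex F m).map hij (eMex m i hi) =
            (if i = ((0:ℤ),(1:ℤ),(0:ℤ)) ∧ j = ((1:ℤ),(1:ℤ),(0:ℤ)) then m else 1) •
              eMex m j hj := by
          apply Subtype.ext
          rw [mex_map_val m hi hj]
          rfl
        rw [h2, map_smul] at hsq
        have h3 := int_map_val Qset_convex hi hj hij ((f i) (eMex m i hi))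
        rw [hsq] at h3
        rw [← h3]
        rfl
      have e1 := key _ _ qa qd lad
      have e2 := key _ _ qa qe lae
      have e3 := key _ _ qb qd lbd
      have e4 := key _ _ qb qf lbf
      have e5 := key _ _ qc qe lce
      have e6 := key _ _ qc qf lcf
      simp only [Prod.mk.injEq] at e1 e2 e3 e4 e5 e6
      norm_num at e1 e2 e3 e4 e5 e6
      have hmain : m * ((f ((1:ℤ),(1:ℤ),(0:ℤ))) (eMex m _ qd)).1 =
          1 * ((f ((1:ℤ),(1:ℤ),(0:ℤ))) (eMex m _ qd)).1 := by
        rw [one_mul, ← e3, e4, ← e6, e5, ← e2, e1]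
      exact mul_right_cancel₀ (lamne _ qd) hmain
    · intro h1
      subst h1
      refine ⟨fun p => LinearEquiv.refl F _, ?_⟩
      intro i j hij
      ext x
      simp only [LinearMap.comp_apply, LinearEquiv.coe_coe, LinearEquiv.refl_apply]
      by_cases hj : j ∈ Qset
      · by_cases hi : i ∈ Qset
        · apply Subtype.ext
          exact (int_map_val Qset_convex hi hj hij x).trans
            (show (((Mex F 1).map hij) x).1 = x.1 by
              rw [mex_map_val 1 hi hj hij x]; simp).symm
        · have hx : x = 0 := mex_val_eq_zero 1 hi x
          rw [hx]
          exact (congrArg _ (map_zero _)).trans ((map_zero _).trans ((congrArg _ (map_zero _)).trans (map_zero _)).symm)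
      · have h1 := int_val_eq_zero Qset_convex hj
          (((intervalModule F Qset Qset_convex).map hij) x)
        have h2 := mex_val_eq_zero 1 hj (((Mex F 1).map hij) x)
        exact h1.trans h2.symm
  refine ⟨hrank, hindec, hiff, fun hm1 => ⟨Mex F m, hrank, hindec, ?_⟩⟩
  intro I hconv _ hiso
  have hIQ : I = Qset := by
    obtain ⟨f, _⟩ := hiso
    ext p
    constructor
    · intro hpI
      by_contra hpQ
      have h0 := mex_val_eq_zero m hpQ ((f p).symm (eInt F hconv p hpI))
      have h1 := congrArg (f p) h0
      rw [LinearEquiv.apply_symm_apply, map_zero] at h1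
      exact eInt_ne_zero hconv p hpI h1
    · intro hpQ
      by_contra hpI
      have h0 := int_val_eq_zero hconv hpI ((f p) (eMex m p hpQ))
      exact eMex_ne_zero m p hpQ ((LinearEquiv.map_eq_zero_iff (f p)).mp h0)
  subst hIQ
  exact hm1 (hiff.mp hiso)
end

section
/- Let J ⊆ ℝ² be convex with respect to the product order. Then any two points a,b ∈ J that are connected by a zigzag path in J are connected by a reduced staircase in J, i.e., a zigzag path consisting only of horizontal and vertical segments (each consecutive pair comparable in the product order) with no two consecutive horizontal and no two consecutive vertical arrows. -/
/-- A zigzag path from `a` to `b` in `J`, encoded as a list: all points lie in `J`,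
consecutive points are comparable, and the list starts at `a` and ends at `b`. -/
def IsZigzagList (J : Set (ℝ × ℝ)) (a b : ℝ × ℝ) (l : List (ℝ × ℝ)) : Prop :=
  l.head? = some a ∧ l.getLast? = some b ∧ (∀ x ∈ l, x ∈ J) ∧
  l.Chain' (fun x y => x ≤ y ∨ y ≤ x)

/-- A reduced staircase from `a` to `b` in `J`: a zigzag path all of whose arrows are
horizontal or vertical, with no two consecutive horizontal arrows and no two
consecutive vertical arrows. -/
def IsReducedStaircase (J : Set (ℝ × ℝ)) (a b : ℝ × ℝ) (l : List (ℝ × ℝ)) : Prop :=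
  l.head? = some a ∧ l.getLast? = some b ∧ (∀ x ∈ l, x ∈ J) ∧
  l.Chain' (fun x y => (x ≤ y ∨ y ≤ x) ∧ (x.1 = y.1 ∨ x.2 = y.2)) ∧
  ∀ i : ℕ, ∀ h : i + 2 < l.length,
    ¬ ((l[i]'(by omega)).1 = (l[i+1]'(by omega)).1 ∧
        (l[i+1]'(by omega)).1 = (l[i+2]'h).1) ∧
    ¬ ((l[i]'(by omega)).2 = (l[i+1]'(by omega)).2 ∧
        (l[i+1]'(by omega)).2 = (l[i+2]'h).2)

section Aux
open Classical
open Classical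

abbrev Pt := ℝ × ℝ

def SRel (x y : Pt) : Prop := (x ≤ y ∨ y ≤ x) ∧ (x.1 = y.1 ∨ x.2 = y.2)

lemma comp_of_fst (x y : Pt) (h : x.1 = y.1) : x ≤ y ∨ y ≤ x := by
  rcases le_total x.2 y.2 with h2 | h2
  · left; exact ⟨le_of_eq h, h2⟩
  · right; exact ⟨le_of_eq h.symm, h2⟩

lemma comp_of_snd (x y : Pt) (h : x.2 = y.2) : x ≤ y ∨ y ≤ x := by
  rcases le_total x.1 y.1 with h1 | h1
  · left; exact ⟨h1, le_of_eq h⟩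
  · right; exact ⟨h1, le_of_eq h.symm⟩

def MergeCond (x y z : Pt) : Prop := (x.1 = y.1 ∧ y.1 = z.1) ∨ (x.2 = y.2 ∧ y.2 = z.2)

noncomputable def reduce : List Pt → List Pt
  | x :: y :: z :: t =>
    if MergeCond x y z then reduce (x :: z :: t) else x :: reduce (y :: z :: t)
  | l => l
termination_by l => l.length

def NoTriple (l : List Pt) : Prop :=
  ∀ i : ℕ, ∀ h : i + 2 < l.length,
    ¬ ((l[i]'(by omega)).1 = (l[i+1]'(by omega)).1 ∧
        (l[i+1]'(by omega)).1 = (l[i+2]'h).1) ∧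
    ¬ ((l[i]'(by omega)).2 = (l[i+1]'(by omega)).2 ∧
        (l[i+1]'(by omega)).2 = (l[i+2]'h).2)

lemma noTriple_short (l : List Pt) (h : l.length ≤ 2) : NoTriple l := by
  intro i hi; omega

lemma noTriple_cons (x y z : Pt) (t : List Pt) (hm : ¬ MergeCond x y z)
    (ht : NoTriple (y :: z :: t)) : NoTriple (x :: y :: z :: t) := by
  intro i hi
  cases i with
  | zero =>
    simp only [List.getElem_cons_zero, List.getElem_cons_succ]
    constructor
    · intro h; exact hm (Or.inl h)
    · intro h; exact hm (Or.inr h)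
  | succ n =>
    simp only [List.getElem_cons_succ]
    exact ht n (by simpa using hi)

lemma reduce_head (l : List Pt) : (reduce l).head? = l.head? := by
  induction l using reduce.induct with
  | case1 x y z t hc ih => rw [reduce, if_pos hc]; simpa using ih
  | case2 x y z t hc ih => rw [reduce, if_neg hc]; simp
  | case3 l h =>
    rw [reduce.eq_def]
    split
    · exact absurd rfl (h _ _ _ _)
    · rfl

lemma reduce_ne_nil (l : List Pt) (h : l ≠ []) : reduce l ≠ [] := by
  intro hc
  have := reduce_head l
  rw [hc] at this
  exact h (List.head?_eq_none_iff.mp this.symm)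

lemma reduce_getLast (l : List Pt) : (reduce l).getLast? = l.getLast? := by
  induction l using reduce.induct with
  | case1 x y z t hc ih =>
    rw [reduce, if_pos hc, ih]
    simp [List.getLast?_cons_cons]
  | case2 x y z t hc ih =>
    rw [reduce, if_neg hc]
    have hne : reduce (y :: z :: t) ≠ [] := reduce_ne_nil _ (by simp)
    obtain ⟨w, s, hw⟩ := List.exists_cons_of_ne_nil hne
    rw [hw, List.getLast?_cons_cons, ← hw, ih]
    simp [List.getLast?_cons_cons]
  | case3 l h =>
    rw [reduce.eq_def]
    split
    · exact absurd rfl (h _ _ _ _)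
    · rfl

lemma reduce_subset (l : List Pt) : ∀ p ∈ reduce l, p ∈ l := by
  induction l using reduce.induct with
  | case1 x y z t hc ih =>
    rw [reduce, if_pos hc]
    intro p hp
    have := ih p hp
    simp at this ⊢; tauto
  | case2 x y z t hc ih =>
    rw [reduce, if_neg hc]
    intro p hp
    simp at hp
    rcases hp with rfl | hp
    · simp
    · have := ih p hp; simp at this ⊢; tauto
  | case3 l h =>
    rw [reduce.eq_def]
    split
    · exact absurd rfl (h _ _ _ _)
    · exact fun p hp => hp

lemma reduce_chain (l : List Pt) (hl : l.Chain' SRel) : (reduce l).Chain' SRel := by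
  induction l using reduce.induct with
  | case1 x y z t hc ih =>
    rw [reduce, if_pos hc]
    apply ih
    rw [List.Chain', List.isChain_cons_cons] at hl ⊢
    obtain ⟨hxy, hl⟩ := hl
    rw [List.isChain_cons_cons] at hl
    refine ⟨?_, hl.2⟩
    rcases hc with ⟨h1, h2⟩ | ⟨h1, h2⟩
    · exact ⟨comp_of_fst _ _ (h1.trans h2), Or.inl (h1.trans h2)⟩
    · exact ⟨comp_of_snd _ _ (h1.trans h2), Or.inr (h1.trans h2)⟩
  | case2 x y z t hc ih =>
    rw [reduce, if_neg hc]
    rw [List.Chain', List.isChain_cons_cons] at hl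
    have hr := ih hl.2
    have hne : reduce (y :: z :: t) ≠ [] := reduce_ne_nil _ (by simp)
    obtain ⟨w, s, hw⟩ := List.exists_cons_of_ne_nil hne
    rw [hw, List.Chain', List.isChain_cons_cons]
    have hhead : w = y := by
      have := reduce_head (y :: z :: t)
      rw [hw] at this; simpa using this
    subst hhead
    exact ⟨hl.1, hw ▸ hr⟩
  | case3 l h =>
    rw [reduce.eq_def]
    split
    · exact absurd rfl (h _ _ _ _)
    · exact hl

lemma reduce_length (l : List Pt) : (reduce l).length ≤ l.length := by
  induction l using reduce.induct with
  | case1 x y z t hc ih => rw [reduce, if_pos hc]; simp at ih ⊢; omega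
  | case2 x y z t hc ih => rw [reduce, if_neg hc]; simp at ih ⊢; omega
  | case3 l h =>
    rw [reduce.eq_def]
    split
    · exact absurd rfl (h _ _ _ _)
    · exact le_refl _

lemma reduce_fixed (l : List Pt) (h : (reduce l).length = l.length) : NoTriple l := by
  induction l using reduce.induct with
  | case1 x y z t hc ih =>
    exfalso
    rw [reduce, if_pos hc] at h
    have := reduce_length (x :: z :: t)
    simp at h this; omega
  | case2 x y z t hc ih =>
    rw [reduce, if_neg hc] at h
    simp only [List.length_cons] at h
    exact noTriple_cons x y z t hc (ih (by simp only [List.length_cons]; omega))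
  | case3 l hs =>
    apply noTriple_short
    rw [reduce.eq_def] at h
    match l, hs with
    | [], _ => simp
    | [x], _ => simp
    | [x, y], _ => simp
    | x :: y :: z :: t, hs => exact absurd rfl (hs _ _ _ _)

noncomputable def fullReduce (l : List Pt) : List Pt :=
  if (reduce l).length < l.length then fullReduce (reduce l) else l
termination_by l.length

lemma fullReduce_spec (l : List Pt) :
    (fullReduce l).head? = l.head? ∧ (fullReduce l).getLast? = l.getLast? ∧
    (∀ p ∈ fullReduce l, p ∈ l) ∧ (l.Chain' SRel → (fullReduce l).Chain' SRel) ∧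
    NoTriple (fullReduce l) := by
  induction l using fullReduce.induct with
  | case1 l hlt ih =>
    rw [fullReduce, if_pos hlt]
    obtain ⟨h1, h2, h3, h4, h5⟩ := ih
    exact ⟨h1.trans (reduce_head l), h2.trans (reduce_getLast l),
      fun p hp => reduce_subset l p (h3 p hp),
      fun hc => h4 (reduce_chain l hc), h5⟩
  | case2 l hlt =>
    rw [fullReduce, if_neg hlt]
    refine ⟨rfl, rfl, fun p hp => hp, fun hc => hc, ?_⟩
    exact reduce_fixed l (le_antisymm (reduce_length l) (by omega))

def stair : List Pt → List Pt
  | x :: y :: t => x :: ((y.1, x.2) : Pt) :: stair (y :: t)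
  | l => l

lemma stair_head (l : List Pt) : (stair l).head? = l.head? := by
  match l with
  | [] => rfl
  | [x] => rfl
  | x :: y :: t => rw [stair]; simp

lemma stair_getLast (l : List Pt) : (stair l).getLast? = l.getLast? := by
  match l with
  | [] => rfl
  | [x] => rfl
  | x :: y :: t =>
    rw [stair]
    have hne : stair (y :: t) ≠ [] := by
      intro hc
      have := stair_head (y :: t)
      rw [hc] at this; simp at this
    obtain ⟨w, s, hw⟩ := List.exists_cons_of_ne_nil hne
    rw [hw, List.getLast?_cons_cons, List.getLast?_cons_cons, ← hw,
      stair_getLast (y :: t), List.getLast?_cons_cons]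

lemma stair_spec (J : Set Pt) (hconv : PosetConvex J) (l : List Pt)
    (hmem : ∀ x ∈ l, x ∈ J) (hch : l.Chain' (fun x y => x ≤ y ∨ y ≤ x)) :
    (∀ p ∈ stair l, p ∈ J) ∧ (stair l).Chain' SRel := by
  match l with
  | [] => exact ⟨by simp [stair], List.isChain_nil⟩
  | [x] => exact ⟨by simpa [stair] using hmem, List.isChain_singleton _⟩
  | x :: y :: t =>
    rw [List.Chain', List.isChain_cons_cons] at hch
    have hx : x ∈ J := hmem x (by simp)
    have hy : y ∈ J := hmem y (by simp)
    have ih := stair_spec J hconv (y :: t) (fun p hp => hmem p (List.mem_cons_of_mem _ hp)) hch.2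
    have hmid : ((y.1, x.2) : Pt) ∈ J := by
      rcases hch.1 with h | h
      · exact hconv x hx y hy _ ⟨h.1, le_refl _⟩ ⟨le_refl _, h.2⟩
      · exact hconv y hy x hx _ ⟨le_refl _, h.2⟩ ⟨h.1, le_refl _⟩
    constructor
    · intro p hp
      rw [stair] at hp
      simp only [List.mem_cons] at hp
      rcases hp with rfl | rfl | hp
      · exact hx
      · exact hmid
      · exact ih.1 p hp
    · rw [stair]
      have hne : stair (y :: t) ≠ [] := by
        intro hc; have := stair_head (y :: t); rw [hc] at this; simp at this
      obtain ⟨w, s, hw⟩ := List.exists_cons_of_ne_nil hne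
      have hhead : w = y := by
        have := stair_head (y :: t); rw [hw] at this; simpa using this
      subst hhead
      rw [hw, List.Chain', List.isChain_cons_cons, List.isChain_cons_cons]
      refine ⟨⟨comp_of_snd _ _ rfl, Or.inr rfl⟩, ⟨comp_of_fst _ _ rfl, Or.inl rfl⟩, ?_⟩
      rw [← hw]; exact ih.2

end Aux

/-- If `J ⊆ ℝ²` is convex for the product order, then any two points
`a, b ∈ J` joined by a zigzag path in `J` are joined by a reduced staircase in `J`. -/
theorem statement16 (J : Set (ℝ × ℝ)) (hconv : PosetConvex J)
    (a b : ℝ × ℝ) (ha : a ∈ J) (hb : b ∈ J)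
    (l : List (ℝ × ℝ)) (hl : IsZigzagList J a b l) :
    ∃ s : List (ℝ × ℝ), IsReducedStaircase J a b s := by
  obtain ⟨hh, hla, hmem, hch⟩ := hl
  obtain ⟨hsm, hsc⟩ := stair_spec J hconv l hmem hch
  obtain ⟨h1, h2, h3, h4, h5⟩ := fullReduce_spec (stair l)
  refine ⟨fullReduce (stair l), ?_, ?_, ?_, h4 hsc, h5⟩
  · rw [h1, stair_head, hh]
  · rw [h2, stair_getLast, hla]
  · exact fun p hp => hsm p (h3 p hp)
end
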